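/- If there exists an (n,W)-universal graph with s vertices, then there exists an (n,W)-separating automaton of size s (i.e., with s states not counting the rejecting state ⊥). -/

import Mathlib

open Filter


/-- A finite path: a list of consecutive edges, all belonging to `E`,
starting at `u` (when nonempty). -/
def FinPath {V : Type} (E : Set (V × ℤ × V)) (u : V) (p : List (V × ℤ × V)) : Prop :=
  (∀ e ∈ p, e ∈ E) ∧ List.Chain' (fun e e' => e.2.2 = e'.1) p ∧
    ∀ h : p ≠ [], (p.head h).1 = u

/-- The last vertex of a finite path starting at `u` (which is `u` itself for the empty path). -/
def lastV {V : Type} (u : V) (p : List (V × ℤ × V)) : V :=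
  (p.getLastD (u, 0, u)).2.2

/-- An infinite path: a sequence of consecutive edges, all belonging to `E`. -/
def InfPath {V : Type} (E : Set (V × ℤ × V)) (π : ℕ → V × ℤ × V) : Prop :=
  (∀ i, π i ∈ E) ∧ ∀ i, (π i).2.2 = (π (i + 1)).1

/-- The total weight of a finite path. -/
def pathWeight {V : Type} (p : List (V × ℤ × V)) : ℤ :=
  (p.map fun e => e.2.1).sum

/-- A sequence of integer weights satisfies mean payoff if the liminf of the
averages of its prefixes is nonnegative. -/
def MeanPayoffSeq (w : ℕ → ℤ) : Prop :=
  0 ≤ Filter.atTop.liminf (fun ℓ : ℕ => (∑ i ∈ Finset.range ℓ, (w i : ℝ)) / (ℓ : ℝ))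

/-- A graph (given by its edge set) satisfies mean payoff if all its infinite paths do. -/
def SatMP {V : Type} (E : Set (V × ℤ × V)) : Prop :=
  ∀ π : ℕ → V × ℤ × V, InfPath E π → MeanPayoffSeq (fun i => (π i).2.1)

/-- A cycle: a nonempty finite path whose first and last vertices coincide. -/
def IsCycle {V : Type} (E : Set (V × ℤ × V)) (p : List (V × ℤ × V)) : Prop :=
  p ≠ [] ∧ ∃ v, FinPath E v p ∧ lastV v p = v

/-- A `W`-graph: a finite set of vertices, edges labelled by weights in `W`,
and an initial vertex from which every vertex is reachable. -/
structure WGraph (W : Finset ℤ) where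
  V : Type
  fin : Fintype V
  E : Set (V × ℤ × V)
  init : V
  wt : ∀ e ∈ E, e.2.1 ∈ W
  reach : ∀ v : V, ∃ p, FinPath E init p ∧ lastV init p = v

attribute [instance] WGraph.fin

/-- A deterministic safety automaton over the alphabet `W`. -/
structure SafetyAut (W : Finset ℤ) where
  Q : Type
  fin : Fintype Q
  bot : Q
  qinit : Q
  δ : Q → ℤ → Q
  bot_absorbing : ∀ w ∈ W, δ bot w = bot

attribute [instance] SafetyAut.fin

/-- The run of the automaton over an infinite word. -/
def SafetyAut.run {W : Finset ℤ} (A : SafetyAut W) (w : ℕ → ℤ) : ℕ → A.Q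
  | 0 => A.qinit
  | i + 1 => A.δ (A.run w i) (w i)

/-- The language of the automaton: words over `W` whose run never visits `⊥`. -/
def SafetyAut.Lang {W : Finset ℤ} (A : SafetyAut W) : Set (ℕ → ℤ) :=
  {w | (∀ i, w i ∈ W) ∧ ∀ i, A.run w i ≠ A.bot}

/-- `MP(W)`: the set of infinite words over `W` satisfying mean payoff. -/
def MPlang (W : Finset ℤ) : Set (ℕ → ℤ) :=
  {w | (∀ i, w i ∈ W) ∧ MeanPayoffSeq w}

/-- `MP_n(W)`: the set of weight sequences of infinite paths of `(n,W)`-graphs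
satisfying mean payoff. -/
def MPn (n : ℕ) (W : Finset ℤ) : Set (ℕ → ℤ) :=
  {w | ∃ G : WGraph W, Fintype.card G.V ≤ n ∧ SatMP G.E ∧
    ∃ π, InfPath G.E π ∧ ∀ i, (π i).2.1 = w i}

/-- An `(n,W)`-separating automaton: its language `L` satisfies `MP_n(W) ⊆ L ⊆ MP(W)`. -/
def Separating {W : Finset ℤ} (n : ℕ) (A : SafetyAut W) : Prop :=
  MPn n W ⊆ A.Lang ∧ A.Lang ⊆ MPlang W

/-- The `W`-linear graph on a set `A ⊆ ℤ`: vertices are the elements of `A`, and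
for `v, v' ∈ A` and `w ∈ W` there is an edge `(v, w, v')` whenever `v' - v ≤ w`. -/
def LinE (W : Finset ℤ) (A : Set ℤ) : Set (ℤ × ℤ × ℤ) :=
  {e | e.1 ∈ A ∧ e.2.2 ∈ A ∧ e.2.1 ∈ W ∧ e.2.2 - e.1 ≤ e.2.1}

/-- A homomorphism of labelled graphs (no requirement on initial vertices). -/
def IsHom {V U : Type} (E : Set (V × ℤ × V)) (E' : Set (U × ℤ × U)) (φ : V → U) : Prop :=
  ∀ e ∈ E, (φ e.1, e.2.1, φ e.2.2) ∈ E'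

/-- A graph (given by its edge set) is `(n,W)`-universal if it satisfies mean payoff and
every `(n,W)`-graph satisfying mean payoff admits a homomorphism into it. -/
def Universal (n : ℕ) (W : Finset ℤ) {U : Type} (EU : Set (U × ℤ × U)) : Prop :=
  SatMP EU ∧
    ∀ G : WGraph W, Fintype.card G.V ≤ n → SatMP G.E → ∃ φ : G.V → U, IsHom G.E EU φ

/-- The set of weights `(-N, N)`: integers `w` with `-N < w < N`. -/
noncomputable def Wball (N : ℕ) : Finset ℤ := Finset.Ioo (-(N : ℤ)) (N : ℤ)

/-- `φ` is the distance function from the initial vertex: `φ v` is the minimum total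
weight of a finite path from the initial vertex to `v`. -/
def IsDistFrom {W : Finset ℤ} (G : WGraph W) (φ : G.V → ℤ) : Prop :=
  ∀ v : G.V,
    (∃ p, FinPath G.E G.init p ∧ lastV G.init p = v ∧ pathWeight p = φ v) ∧
    ∀ p, FinPath G.E G.init p → lastV G.init p = v → φ v ≤ pathWeight p

lemma avg_lb {w : ℕ → ℤ} {M : ℝ} (hM : 0 ≤ M) (h : ∀ i, -M ≤ (w i : ℝ)) (ℓ : ℕ) :
    -M ≤ (∑ i ∈ Finset.range ℓ, (w i : ℝ)) / (ℓ : ℝ) := by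
  rcases Nat.eq_zero_or_pos ℓ with rfl | hl
  · simpa using neg_nonpos_of_nonneg hM
  · rw [le_div_iff₀ (by exact_mod_cast hl)]
    calc -M * ℓ = ∑ _i ∈ Finset.range ℓ, (-M) := by
          simp [Finset.sum_const, Finset.card_range, nsmul_eq_mul]; ring
      _ ≤ _ := Finset.sum_le_sum fun i _ => h i

lemma avg_ub {w : ℕ → ℤ} {M : ℝ} (hM : 0 ≤ M) (h : ∀ i, (w i : ℝ) ≤ M) (ℓ : ℕ) :
    (∑ i ∈ Finset.range ℓ, (w i : ℝ)) / (ℓ : ℝ) ≤ M := by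
  rcases Nat.eq_zero_or_pos ℓ with rfl | hl
  · simpa using hM
  · rw [div_le_iff₀ (by exact_mod_cast hl)]
    calc (∑ i ∈ Finset.range ℓ, (w i : ℝ)) ≤ ∑ _i ∈ Finset.range ℓ, M :=
          Finset.sum_le_sum fun i _ => h i
      _ = M * ℓ := by simp [Finset.sum_const, Finset.card_range, nsmul_eq_mul]; ring

lemma not_meanPayoff_of_freq {w : ℕ → ℤ} {b M : ℝ} (hM : 0 ≤ M) (hlb : ∀ i, -M ≤ (w i : ℝ))
    (hb : b < 0) (hfreq : ∃ᶠ ℓ in atTop, (∑ i ∈ Finset.range ℓ, (w i : ℝ)) / (ℓ : ℝ) ≤ b) :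
    ¬ MeanPayoffSeq w := by
  intro hmp
  have hbd : IsBoundedUnder (· ≥ ·) atTop
      (fun ℓ : ℕ => (∑ i ∈ Finset.range ℓ, (w i : ℝ)) / (ℓ : ℝ)) :=
    isBoundedUnder_of ⟨-M, fun ℓ => avg_lb hM hlb ℓ⟩
  have h := Filter.liminf_le_of_frequently_le hfreq hbd
  have := hmp.trans h
  linarith

lemma sum_mod_periodic (c : ℕ → ℤ) (L : ℕ) (k : ℕ) :
    ∑ i ∈ Finset.range (k * L), c (i % L) = (k : ℤ) * ∑ i ∈ Finset.range L, c i := by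
  induction k with
  | zero => simp
  | succ k ih =>
    rw [Nat.succ_mul, Finset.sum_range_add, ih]
    have h2 : ∀ i ∈ Finset.range L, c ((k * L + i) % L) = c i := by
      intro i hi
      rw [mul_comm, Nat.mul_add_mod, Nat.mod_eq_of_lt (Finset.mem_range.mp hi)]
    rw [Finset.sum_congr rfl h2]
    push_cast
    ring

lemma cycle_nonneg {U : Type} {E : Set (U × ℤ × U)} (hE : SatMP E) {L : ℕ} (hL : 0 < L)
    (x : ℕ → U) (c : ℕ → ℤ) (hedge : ∀ k < L, (x k, c k, x (k + 1)) ∈ E)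
    (hcyc : x L = x 0) : 0 ≤ ∑ k ∈ Finset.range L, c k := by
  by_contra hneg
  push_neg at hneg
  set π : ℕ → U × ℤ × U := fun i => (x (i % L), c (i % L), x (i % L + 1)) with hπdef
  have hpath : InfPath E π := by
    refine ⟨fun i => hedge _ (Nat.mod_lt _ hL), fun i => ?_⟩
    show x (i % L + 1) = x ((i + 1) % L)
    have h1 : (i % L + 1) % L = (i + 1) % L := Nat.mod_add_mod i L 1
    rcases Nat.lt_or_ge (i % L + 1) L with h | h
    · rw [← h1, Nat.mod_eq_of_lt h]
    · have heq : i % L + 1 = L := le_antisymm (Nat.succ_le_of_lt (Nat.mod_lt i hL)) h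
      have h2 : (i + 1) % L = 0 := by rw [← h1, heq, Nat.mod_self]
      rw [heq, h2, hcyc]
  have hmp := hE π hpath
  set M : ℤ := ∑ k ∈ Finset.range L, |c k| with hMdef
  have hM0 : (0:ℝ) ≤ (M : ℝ) := by
    have : (0:ℤ) ≤ M := Finset.sum_nonneg fun _ _ => abs_nonneg _
    exact_mod_cast this
  have hlb : ∀ i, -(M:ℝ) ≤ ((π i).2.1 : ℝ) := by
    intro i
    have h1 : |c (i % L)| ≤ M :=
      Finset.single_le_sum (f := fun k => |c k|) (fun _ _ => abs_nonneg _)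
        (Finset.mem_range.mpr (Nat.mod_lt _ hL))
    have h2 := neg_abs_le (c (i % L))
    have : -M ≤ c (i % L) := by linarith
    exact_mod_cast this
  set s : ℤ := ∑ k ∈ Finset.range L, c k with hsdef
  have hfreq : ∃ᶠ ℓ in atTop,
      (∑ i ∈ Finset.range ℓ, ((π i).2.1 : ℝ)) / (ℓ : ℝ) ≤ (s:ℝ)/(L:ℝ) := by
    rw [Filter.frequently_atTop]
    intro m
    refine ⟨(m+1) * L, ?_, ?_⟩
    · calc m ≤ m + 1 := by omega
        _ ≤ (m+1) * L := Nat.le_mul_of_pos_right _ hL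
    · have h2 : ∑ i ∈ Finset.range ((m+1)*L), ((π i).2.1 : ℝ)
          = ((m+1:ℕ):ℝ) * (s:ℝ) := by
        have h3 : ∑ i ∈ Finset.range ((m+1)*L), (π i).2.1 = ((m+1:ℕ) : ℤ) * s :=
          sum_mod_periodic c L (m+1)
        calc ∑ i ∈ Finset.range ((m+1)*L), ((π i).2.1 : ℝ)
            = ((∑ i ∈ Finset.range ((m+1)*L), (π i).2.1 : ℤ) : ℝ) := by push_cast; rfl
          _ = ((((m+1:ℕ) : ℤ) * s : ℤ) : ℝ) := by rw [h3]
          _ = _ := by push_cast; ring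
      rw [h2]
      have h4 : (((m+1) * L : ℕ) : ℝ) = ((m+1:ℕ):ℝ) * (L:ℝ) := by push_cast; ring
      rw [h4, mul_div_mul_left _ _ (by positivity : ((m+1:ℕ):ℝ) ≠ 0)]
  have hsL : (s:ℝ)/(L:ℝ) < 0 :=
    div_neg_of_neg_of_pos (by exact_mod_cast hneg) (by exact_mod_cast hL)
  exact not_meanPayoff_of_freq hM0 hlb hsL hfreq hmp

lemma path_sum_lb {U : Type} [Fintype U] {W : Finset ℤ} {E : Set (U × ℤ × U)} (hE : SatMP E)
    (hW : ∀ e ∈ E, e.2.1 ∈ W) (m : ℕ) :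
    ∀ (x : ℕ → U) (c : ℕ → ℤ), (∀ i < m, (x i, c i, x (i + 1)) ∈ E) →
      -((Fintype.card U : ℤ) * ∑ w ∈ W, |w|) ≤ ∑ i ∈ Finset.range m, c i := by
  induction m using Nat.strong_induction_on with
  | _ m ih =>
    intro x c hx
    set N := Fintype.card U with hN
    set C : ℤ := ∑ w ∈ W, |w| with hC
    have hC0 : 0 ≤ C := Finset.sum_nonneg fun _ _ => abs_nonneg _
    have hcC : ∀ i < m, -C ≤ c i := by
      intro i hi
      have h1 : |c i| ≤ C :=
        Finset.single_le_sum (f := fun w => |w|) (fun _ _ => abs_nonneg _) (hW _ (hx i hi))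
      have := neg_abs_le (c i)
      linarith
    rcases le_or_gt m N with hm | hm
    · have h1 : ∑ _i ∈ Finset.range m, (-C) ≤ ∑ i ∈ Finset.range m, c i :=
        Finset.sum_le_sum fun i hi => hcC i (Finset.mem_range.mp hi)
      have h2 : ∑ _i ∈ Finset.range m, (-C) = (m : ℤ) * (-C) := by
        simp [Finset.sum_const, Finset.card_range]
      have h3 : (m : ℤ) ≤ (N : ℤ) := by exact_mod_cast hm
      nlinarith
    · -- pigeonhole
      obtain ⟨i0, j0, hne, heq0⟩ := Fintype.exists_ne_map_eq_of_card_lt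
        (fun k : Fin (N + 1) => x k) (by simp [hN])
      obtain ⟨a, b, hab, hbN, hxab⟩ : ∃ a b : ℕ, a < b ∧ b ≤ N ∧ x a = x b := by
        rcases lt_or_gt_of_ne hne with h | h
        · exact ⟨i0, j0, h, Nat.lt_succ_iff.mp j0.isLt, heq0⟩
        · exact ⟨j0, i0, h, Nat.lt_succ_iff.mp i0.isLt, heq0.symm⟩
      set d := b - a with hd
      have hd1 : 0 < d := by omega
      have hbm : b < m := by omega
      -- the cycle from a to b has nonnegative weight
      have hcyc : 0 ≤ ∑ k ∈ Finset.range d, c (a + k) := by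
        refine cycle_nonneg hE hd1 (fun k => x (a + k)) (fun k => c (a + k)) ?_ ?_
        · intro k hk
          exact hx (a + k) (by omega)
        · show x (a + d) = x (a + 0)
          rw [show a + d = b from by omega, show a + 0 = a from rfl]
          exact hxab.symm
      -- splice out the cycle
      set m' := m - d with hm'
      set x' : ℕ → U := fun k => if k < a then x k else x (k + d) with hx'
      set c' : ℕ → ℤ := fun k => if k < a then c k else c (k + d) with hc'
      have hedge' : ∀ i < m', (x' i, c' i, x' (i + 1)) ∈ E := by
        intro i hi
        rcases Nat.lt_or_ge i a with h | h
        · rcases Nat.lt_or_ge (i + 1) a with h2 | h2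
          · simp only [hx', hc', if_pos h, if_pos h2]
            exact hx i (by omega)
          · have h3 : i + 1 = a := by omega
            simp only [hx', hc', if_pos h, if_neg (by omega : ¬ i + 1 < a)]
            have h4 : i + 1 + d = b := by omega
            rw [h4, ← hxab, ← h3]
            exact hx i (by omega)
        · simp only [hx', hc', if_neg (by omega : ¬ i < a), if_neg (by omega : ¬ i + 1 < a)]
          have h4 : i + 1 + d = i + d + 1 := by omega
          rw [h4]
          exact hx (i + d) (by omega)
      have hIH := ih m' (by omega) x' c' hedge'
      -- sum decomposition
      have hsum' : ∑ i ∈ Finset.range m', c' i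
          = (∑ i ∈ Finset.range m, c i) - ∑ k ∈ Finset.range d, c (a + k) := by
        have e1 : ∑ i ∈ Finset.range m', c' i
            = ∑ i ∈ Finset.range a, c' i + ∑ i ∈ Finset.Ico a m', c' i := by
          rw [Finset.range_eq_Ico, Finset.range_eq_Ico]
          exact (Finset.sum_Ico_consecutive c' (Nat.zero_le a) (by omega : a ≤ m')).symm
        have e2 : ∑ i ∈ Finset.range a, c' i = ∑ i ∈ Finset.range a, c i :=
          Finset.sum_congr rfl fun i hi => by
            simp [hc', if_pos (Finset.mem_range.mp hi)]
        have e3 : ∑ i ∈ Finset.Ico a m', c' i = ∑ i ∈ Finset.Ico b m, c i := by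
          rw [Finset.sum_Ico_eq_sum_range, Finset.sum_Ico_eq_sum_range]
          have hmm : m' - a = m - b := by omega
          rw [hmm]
          refine Finset.sum_congr rfl fun i _ => ?_
          simp only [hc', if_neg (by omega : ¬ a + i < a)]
          congr 1
          omega
        have e4 : ∑ i ∈ Finset.range m, c i
            = ∑ i ∈ Finset.range a, c i + ∑ i ∈ Finset.Ico a b, c i
              + ∑ i ∈ Finset.Ico b m, c i := by
          rw [Finset.range_eq_Ico,
            ← Finset.sum_Ico_consecutive c (Nat.zero_le b) (by omega : b ≤ m),
            ← Finset.sum_Ico_consecutive c (Nat.zero_le a) (le_of_lt hab), Finset.range_eq_Ico]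
        have e5 : ∑ i ∈ Finset.Ico a b, c i = ∑ k ∈ Finset.range d, c (a + k) := by
          rw [Finset.sum_Ico_eq_sum_range]
        rw [e1, e2, e3, e4, e5]
        ring
      linarith

/-- The set of weights of finite paths ending at `u`. -/
def potSet {U : Type} (E : Set (U × ℤ × U)) (u : U) : Set ℤ :=
  {z : ℤ | ∃ (m : ℕ) (x : ℕ → U) (c : ℕ → ℤ), x m = u ∧
    (∀ i < m, (x i, c i, x (i + 1)) ∈ E) ∧ ∑ i ∈ Finset.range m, c i = z}

noncomputable def pot {U : Type} (E : Set (U × ℤ × U)) (u : U) : ℤ :=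
  sInf (potSet E u)

lemma potSet_nonempty {U : Type} (E : Set (U × ℤ × U)) (u : U) : (potSet E u).Nonempty :=
  ⟨0, 0, fun _ => u, fun _ => 0, rfl, fun i hi => absurd hi (by omega), by simp⟩

lemma potSet_bddBelow {U : Type} [Fintype U] {W : Finset ℤ} {E : Set (U × ℤ × U)}
    (hE : SatMP E) (hW : ∀ e ∈ E, e.2.1 ∈ W) (u : U) : BddBelow (potSet E u) := by
  refine ⟨-((Fintype.card U : ℤ) * ∑ w ∈ W, |w|), ?_⟩
  rintro z ⟨m, x, c, -, hedge, rfl⟩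
  exact path_sum_lb hE hW m x c hedge

lemma pot_edge {U : Type} [Fintype U] {W : Finset ℤ} {E : Set (U × ℤ × U)}
    (hE : SatMP E) (hW : ∀ e ∈ E, e.2.1 ∈ W) {u u' : U} {w : ℤ} (he : (u, w, u') ∈ E) :
    pot E u' ≤ pot E u + w := by
  have key : ∀ z ∈ potSet E u, pot E u' ≤ z + w := by
    rintro z ⟨m, x, c, hxm, hedge, rfl⟩
    have hmem : (∑ i ∈ Finset.range m, c i) + w ∈ potSet E u' := by
      refine ⟨m + 1, fun i => if i ≤ m then x i else u', fun i => if i < m then c i else w,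
        by simp, ?_, ?_⟩
      · intro i hi
        rcases Nat.lt_or_ge i m with h | h
        · simp only [if_pos (by omega : i ≤ m), if_pos h, if_pos (by omega : i + 1 ≤ m)]
          exact hedge i h
        · have h2 : i = m := by omega
          subst h2
          simp only [if_pos (le_refl i), if_neg (lt_irrefl i), if_neg (by omega : ¬ i + 1 ≤ i)]
          rw [hxm]
          exact he
      · rw [Finset.sum_range_succ]
        simp only [if_neg (lt_irrefl m)]
        congr 1
        exact Finset.sum_congr rfl fun i hi => by
          simp [if_pos (Finset.mem_range.mp hi)]
    have := csInf_le (potSet_bddBelow hE hW u') hmem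
    exact this
  have h2 : pot E u' - w ≤ sInf (potSet E u) :=
    le_csInf (potSet_nonempty E u) fun z hz => by linarith [key z hz]
  have : pot E u' - w ≤ pot E u := h2
  linarith

/-- The safety automaton induced by a linear order of integer "potential" values `T`. -/
noncomputable def linSA (W : Finset ℤ) (T : Finset ℤ) : SafetyAut W where
  Q := Option {t : ℤ // t ∈ T}
  fin := inferInstance
  bot := none
  qinit := if h : T.Nonempty then some ⟨T.max' h, T.max'_mem h⟩ else none
  δ q w := q.bind fun t =>
    if h : (T.filter fun t' => t' ≤ (t : ℤ) + w).Nonempty then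
      some ⟨(T.filter fun t' => t' ≤ (t : ℤ) + w).max' h,
        Finset.mem_of_mem_filter _ (Finset.max'_mem _ h)⟩
    else none
  bot_absorbing _ _ := rfl

lemma linSA_δ_some {W : Finset ℤ} (T : Finset ℤ) (t : ℤ) (ht : t ∈ T) (v : ℤ) :
    (linSA W T).δ (some ⟨t, ht⟩) v =
      if h : (T.filter fun t' => t' ≤ t + v).Nonempty then
        some ⟨(T.filter fun t' => t' ≤ t + v).max' h,
          Finset.mem_of_mem_filter _ (Finset.max'_mem _ h)⟩
      else none := rfl

lemma linSA_run_ge {W : Finset ℤ} (T : Finset ℤ) {w x : ℕ → ℤ} (hxT : ∀ i, x i ∈ T)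
    (hstep : ∀ i, x (i + 1) ≤ x i + w i) :
    ∀ i, ∃ (t : ℤ) (ht : t ∈ T), (linSA W T).run w i = some ⟨t, ht⟩ ∧ x i ≤ t := by
  intro i
  induction i with
  | zero =>
    have hT : T.Nonempty := ⟨x 0, hxT 0⟩
    refine ⟨T.max' hT, T.max'_mem hT, ?_, T.le_max' _ (hxT 0)⟩
    show (linSA W T).qinit = _
    simp [linSA, dif_pos hT]
  | succ i ih =>
    obtain ⟨t, ht, hrun, hxt⟩ := ih
    have hmemf : x (i + 1) ∈ T.filter fun t' => t' ≤ t + w i :=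
      Finset.mem_filter.mpr ⟨hxT (i + 1), le_trans (hstep i) (by linarith)⟩
    have hne : (T.filter fun t' => t' ≤ t + w i).Nonempty := ⟨x (i + 1), hmemf⟩
    refine ⟨(T.filter fun t' => t' ≤ t + w i).max' hne,
      Finset.mem_of_mem_filter _ (Finset.max'_mem _ hne), ?_,
      Finset.le_max' _ _ hmemf⟩
    show (linSA W T).δ ((linSA W T).run w i) (w i) = _
    rw [hrun, linSA_δ_some, dif_pos hne]

lemma linSA_run_step {W : Finset ℤ} (T : Finset ℤ) {w : ℕ → ℤ} {i : ℕ} {t : ℤ} {ht : t ∈ T}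
    (hrun : (linSA W T).run w i = some ⟨t, ht⟩)
    (hne : (linSA W T).run w (i + 1) ≠ none) :
    ∃ (t' : ℤ) (ht' : t' ∈ T), (linSA W T).run w (i + 1) = some ⟨t', ht'⟩ ∧ t' ≤ t + w i := by
  have h1 : (linSA W T).run w (i + 1) = (linSA W T).δ ((linSA W T).run w i) (w i) := rfl
  rw [h1, hrun, linSA_δ_some] at hne ⊢
  by_cases h : (T.filter fun t' => t' ≤ t + w i).Nonempty
  · rw [dif_pos h]
    refine ⟨_, _, rfl, ?_⟩
    exact (Finset.mem_filter.mp (Finset.max'_mem _ h)).2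
  · rw [dif_neg h] at hne
    exact absurd rfl hne

/-- an `(n,W)`-universal graph with `s` vertices induces an
`(n,W)`-separating automaton of size `s` (i.e. with `s` states not counting the
rejecting state `⊥`). -/
theorem universal_to_separating {W : Finset ℤ} (n s : ℕ) (U : Type) [Fintype U]
    (EU : Set (U × ℤ × U)) (hU : Universal n W EU) (hs : Fintype.card U = s) :
    ∃ A : SafetyAut W, Separating n A ∧ Fintype.card A.Q = s + 1 := by
  classical
  obtain ⟨hMP, hhom⟩ := hU
  set E' : Set (U × ℤ × U) := {e | e ∈ EU ∧ e.2.1 ∈ W} with hE'def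
  have hE' : SatMP E' := fun π hp => hMP π ⟨fun i => (hp.1 i).1, hp.2⟩
  have hW' : ∀ e ∈ E', e.2.1 ∈ W := fun e he => he.2
  set ψ : U → ℤ := pot E' with hψdef
  have hψ : ∀ u v u', (u, v, u') ∈ E' → ψ u' ≤ ψ u + v :=
    fun u v u' he => pot_edge hE' hW' he
  set S : Finset ℤ := Finset.image ψ Finset.univ with hSdef
  have hScard : S.card ≤ s := by
    calc S.card ≤ (Finset.univ : Finset U).card := Finset.card_image_le
      _ = s := by rw [Finset.card_univ, hs]
  obtain ⟨T, hST, hTcard⟩ := Infinite.exists_superset_card_eq S s hScard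
  refine ⟨linSA W T, ⟨?_, ?_⟩, ?_⟩
  · -- MPn ⊆ Lang
    rintro w ⟨G, hcard, hGMP, π, hπ, hwi⟩
    obtain ⟨φ, hφ⟩ := hhom G hcard hGMP
    have hwW : ∀ i, w i ∈ W := fun i => hwi i ▸ G.wt _ (hπ.1 i)
    set x : ℕ → ℤ := fun i => ψ (φ (π i).1) with hxdef
    have hxT : ∀ i, x i ∈ T := fun i => hST (Finset.mem_image_of_mem ψ (Finset.mem_univ _))
    have hstep : ∀ i, x (i + 1) ≤ x i + w i := by
      intro i
      have he : π i ∈ G.E := hπ.1 i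
      have hh : (φ (π i).1, (π i).2.1, φ (π i).2.2) ∈ EU := hφ _ he
      have hh' : (φ (π i).1, (π i).2.1, φ (π i).2.2) ∈ E' := ⟨hh, G.wt _ he⟩
      have h1 : ψ (φ (π i).2.2) ≤ ψ (φ (π i).1) + (π i).2.1 := hψ _ _ _ hh'
      have h2 : x (i + 1) = ψ (φ (π i).2.2) := by rw [hxdef]; simp [← hπ.2 i]
      rw [h2, ← hwi i]
      exact h1
    refine ⟨hwW, fun i => ?_⟩
    obtain ⟨t, ht, hrun, -⟩ := linSA_run_ge T hxT hstep i
    rw [hrun]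
    exact Option.some_ne_none _
  · -- Lang ⊆ MPlang
    rintro w ⟨hwW, hrun⟩
    refine ⟨hwW, ?_⟩
    have hT : T.Nonempty := by
      by_contra hT
      have h0 : (linSA W T).run w 0 = none := by
        show (linSA W T).qinit = none
        simp [linSA, dif_neg hT]
      exact hrun 0 h0
    -- extract the sequence of states
    have hq : ∀ i, ∃ a : {t : ℤ // t ∈ T}, (linSA W T).run w i = some a := by
      intro i
      rcases Option.ne_none_iff_exists'.mp (hrun i) with ⟨a, ha⟩
      exact ⟨a, ha⟩
    set t : ℕ → ℤ := fun i => ((hq i).choose : ℤ) with htdef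
    have htT : ∀ i, t i ∈ T := fun i => (hq i).choose.2
    have hts : ∀ i, (linSA W T).run w i = some ⟨t i, htT i⟩ := by
      intro i
      rw [(hq i).choose_spec]
    have htstep : ∀ i, t (i + 1) ≤ t i + w i := by
      intro i
      obtain ⟨t', ht', hrun', hle⟩ := linSA_run_step T (hts i) (hrun (i + 1))
      have : t (i + 1) = t' := by
        have h2 := (hts (i + 1)).symm.trans hrun'
        exact congrArg Subtype.val (Option.some_injective _ h2)
      rw [this]
      exact hle
    have hpartial : ∀ ℓ, t ℓ ≤ t 0 + ∑ i ∈ Finset.range ℓ, w i := by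
      intro ℓ
      induction ℓ with
      | zero => simp
      | succ ℓ ih =>
        rw [Finset.sum_range_succ]
        calc t (ℓ + 1) ≤ t ℓ + w ℓ := htstep ℓ
          _ ≤ t 0 + (∑ i ∈ Finset.range ℓ, w i + w ℓ) := by linarith
          _ = _ := by ring
    set cz : ℤ := T.min' hT - T.max' hT with hcz
    have hcz0 : cz ≤ 0 := by
      have := T.min'_le _ (T.max'_mem hT)
      simp [hcz]; linarith
    have hsumlb : ∀ ℓ, cz ≤ ∑ i ∈ Finset.range ℓ, w i := by
      intro ℓ
      have h1 := hpartial ℓ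
      have h2 : T.min' hT ≤ t ℓ := T.min'_le _ (htT ℓ)
      have h3 : t 0 ≤ T.max' hT := T.le_max' _ (htT 0)
      simp only [hcz]
      linarith
    -- liminf argument
    set f : ℕ → ℝ := fun ℓ => (∑ i ∈ Finset.range ℓ, (w i : ℝ)) / (ℓ : ℝ) with hf
    set u : ℕ → ℝ := fun ℓ => (cz : ℝ) / (ℓ : ℝ) with hu
    have hcr0 : (cz : ℝ) ≤ 0 := by exact_mod_cast hcz0
    have hle : ∀ ℓ, u ℓ ≤ f ℓ := by
      intro ℓ
      rcases Nat.eq_zero_or_pos ℓ with rfl | hl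
      · simp [hu, hf]
      · have hlr : (0 : ℝ) < (ℓ : ℝ) := by exact_mod_cast hl
        have hcast : (cz : ℝ) ≤ ∑ i ∈ Finset.range ℓ, (w i : ℝ) := by
          have := hsumlb ℓ
          push_cast
          exact_mod_cast this
        show (cz : ℝ) / (ℓ : ℝ) ≤ (∑ i ∈ Finset.range ℓ, (w i : ℝ)) / (ℓ : ℝ)
        gcongr
    have hbdu : IsBoundedUnder (· ≥ ·) atTop u := by
      refine isBoundedUnder_of ⟨(cz : ℝ), fun ℓ => ?_⟩
      rcases Nat.eq_zero_or_pos ℓ with rfl | hl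
      · simpa [hu] using hcr0
      · have hlr : (0 : ℝ) < (ℓ : ℝ) := by exact_mod_cast hl
        have h1 : (1 : ℝ) ≤ (ℓ : ℝ) := by exact_mod_cast hl
        show (cz : ℝ) ≤ (cz : ℝ) / (ℓ : ℝ)
        rw [le_div_iff₀ hlr]
        nlinarith
    have hcob : IsCoboundedUnder (· ≥ ·) atTop f := by
      set D : ℤ := ∑ v ∈ W, |v| with hD
      have hD0 : (0 : ℝ) ≤ (D : ℝ) := by
        have : (0:ℤ) ≤ D := Finset.sum_nonneg fun _ _ => abs_nonneg _
        exact_mod_cast this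
      have hub : ∀ i, (w i : ℝ) ≤ (D : ℝ) := by
        intro i
        have h1 : |w i| ≤ D :=
          Finset.single_le_sum (f := fun v => |v|) (fun _ _ => abs_nonneg _) (hwW i)
        have h2 := le_abs_self (w i)
        have : w i ≤ D := le_trans h2 h1
        exact_mod_cast this
      have hbd : IsBoundedUnder (· ≤ ·) atTop f :=
        isBoundedUnder_of ⟨(D : ℝ), fun ℓ => avg_ub hD0 hub ℓ⟩
      exact hbd.isCoboundedUnder_ge
    have hlim : atTop.liminf u = 0 := by
      rw [hu]
      exact (tendsto_const_div_atTop_nhds_zero_nat ((cz : ℤ) : ℝ)).liminf_eq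
    show (0:ℝ) ≤ atTop.liminf f
    calc (0:ℝ) = atTop.liminf u := hlim.symm
      _ ≤ atTop.liminf f := Filter.liminf_le_liminf (Eventually.of_forall hle) hbdu hcob
  · -- cardinality
    show Fintype.card (Option {t : ℤ // t ∈ T}) = s + 1
    rw [Fintype.card_option, Fintype.card_coe, hTcard]
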